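/- Let Φ ⊂ (0,1] be a set of rationals and define 𝔖_Φ = { (m-1)/m + Σ_i l_i b_i / m : m ∈ ℤ_{>0} ∪ {∞}, l_i ∈ ℤ_{≥0}, b_i ∈ Φ } ∩ [0,1]. If Φ satisfies the descending chain condition (DCC), then 𝔖_Φ also satisfies the DCC. -/

import Mathlib

open Pointwise


/-- A set of rationals satisfies the descending chain condition if it contains no
infinite strictly decreasing sequence. -/
def SatisfiesDCC (S : Set ℚ) : Prop :=
  ¬ ∃ f : ℕ → ℚ, (∀ n, f n ∈ S) ∧ StrictAnti f

/-- The coefficient set `𝔖_Φ = {(m-1)/m + ∑ l_i b_i/m ≤ 1 : m ∈ ℤ_{>0} ∪ {∞},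
l_i ∈ ℤ_{≥0}, b_i ∈ Φ}`, where for `m = ∞` the expression is interpreted as `1`. -/
def SCoeffSet (Φ : Set ℚ) : Set ℚ :=
  {x | x ≤ 1 ∧ (x = 1 ∨ ∃ (m : ℕ), 0 < m ∧ ∃ (n : ℕ) (l : Fin n → ℕ) (b : Fin n → ℚ),
    (∀ i, b i ∈ Φ) ∧ x = ((m : ℚ) - 1) / m + (∑ i, (l i : ℚ) * b i) / m)}

/-- The set of sums of exactly `k` elements of `Φ₀`. -/
def sumSet (Φ₀ : Set ℚ) : ℕ → Set ℚ
  | 0 => {0}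
  | (k + 1) => Φ₀ + sumSet Φ₀ k

lemma sumSet_nonneg {Φ₀ : Set ℚ} (h : ∀ x ∈ Φ₀, (0 : ℚ) ≤ x) :
    ∀ k, ∀ x ∈ sumSet Φ₀ k, (0 : ℚ) ≤ x := by
  intro k
  induction k with
  | zero => rintro x hx; simp [sumSet] at hx; simp [hx]
  | succ k ih =>
    rintro x ⟨a, ha, b, hb, rfl⟩
    exact add_nonneg (h a ha) (ih b hb)

lemma sumSet_isPWO {Φ₀ : Set ℚ} (h : Φ₀.IsPWO) : ∀ k, (sumSet Φ₀ k).IsPWO := by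
  intro k
  induction k with
  | zero => exact (Set.finite_singleton 0).isPWO
  | succ k ih => exact h.add ih

lemma sumSet_add {Φ₀ : Set ℚ} :
    ∀ {j k : ℕ} {x y : ℚ}, x ∈ sumSet Φ₀ j → y ∈ sumSet Φ₀ k →
      x + y ∈ sumSet Φ₀ (j + k) := by
  intro j
  induction j with
  | zero =>
    intro k x y hx hy
    simp only [sumSet, Set.mem_singleton_iff] at hx
    simpa [hx] using hy
  | succ j ih =>
    rintro k x y ⟨a, ha, b, hb, rfl⟩ hy
    have : a + (b + y) ∈ sumSet Φ₀ (j + k + 1) :=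
      Set.add_mem_add ha (ih hb hy)
    have hc : j + k + 1 = j + 1 + k := by omega
    rw [hc] at this
    convert this using 1
    ring

lemma sumSet_mono {Φ₀ : Set ℚ} (h0 : (0 : ℚ) ∈ Φ₀) :
    ∀ {j k : ℕ}, j ≤ k → sumSet Φ₀ j ⊆ sumSet Φ₀ k := by
  have step : ∀ j : ℕ, sumSet Φ₀ j ⊆ sumSet Φ₀ (j + 1) := by
    intro j x hx
    have : (0 : ℚ) + x ∈ sumSet Φ₀ (j + 1) := Set.add_mem_add h0 hx
    simpa using this
  intro j k hjk
  induction hjk with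
  | refl => exact fun x hx => hx
  | step h ih => exact fun x hx => step _ (ih hx)

lemma nsmul_mem_sumSet {Φ₀ : Set ℚ} {b : ℚ} (hb : b ∈ Φ₀) :
    ∀ l : ℕ, (l : ℚ) * b ∈ sumSet Φ₀ l := by
  intro l
  induction l with
  | zero => simp [sumSet]
  | succ l ih =>
    have : b + (l : ℚ) * b ∈ sumSet Φ₀ (l + 1) := Set.add_mem_add hb ih
    convert this using 1
    push_cast
    ring

lemma sum_mem_sumSet {Φ₀ : Set ℚ} :
    ∀ (n : ℕ) (l : Fin n → ℕ) (b : Fin n → ℚ), (∀ i, b i ∈ Φ₀) →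
      (∑ i, (l i : ℚ) * b i) ∈ sumSet Φ₀ (∑ i, l i) := by
  intro n
  induction n with
  | zero => intro l b hb; simp [sumSet]
  | succ n ih =>
    intro l b hb
    rw [Fin.sum_univ_succ, Fin.sum_univ_succ]
    exact sumSet_add (nsmul_mem_sumSet (hb 0) (l 0))
      (ih (fun i => l i.succ) (fun i => b i.succ) (fun i => hb i.succ))

/-- If `Φ ⊂ (0,1] ∩ ℚ` satisfies the DCC, then so does `𝔖_Φ`. -/
theorem stmt14 (Φ : Set ℚ) (hΦ : Φ ⊆ Set.Ioc 0 1) (hdcc : SatisfiesDCC Φ) :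
    SatisfiesDCC (SCoeffSet Φ) := by
  classical
  rintro ⟨f, hf, hanti⟩
  -- Enlarge Φ to a nonempty set Φ' = insert 1 Φ, still in (0,1] and well-founded.
  set Φ' : Set ℚ := insert 1 Φ with hΦ'def
  have hΦ'sub : Φ' ⊆ Set.Ioc 0 1 := by
    rintro x (rfl | hx)
    · exact ⟨one_pos, le_refl 1⟩
    · exact hΦ hx
  have hWF : Φ'.IsWF := by
    rw [Set.isWF_iff_no_descending_seq]
    intro g hg hmem
    apply hdcc
    refine ⟨fun n => g (n + 1), fun n => ?_, fun a b hab => hg (by omega)⟩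
    rcases hmem (n + 1) with h1 | h2
    · exfalso
      have h1' : g (n + 1) = 1 := h1
      have h0 : g 0 ≤ 1 := (hΦ'sub (hmem 0)).2
      have : g (n + 1) < g 0 := hg (by omega)
      linarith
    · exact h2
  have hΦ'ne : Φ'.Nonempty := ⟨1, Set.mem_insert 1 Φ⟩
  set δ : ℚ := hWF.min hΦ'ne with hδdef
  have hδmem : δ ∈ Φ' := hWF.min_mem hΦ'ne
  have hδpos : 0 < δ := (hΦ'sub hδmem).1
  have hδle : ∀ b ∈ Φ', δ ≤ b := fun b hb => hWF.min_le hΦ'ne hb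
  -- The base set for sums: Φ₀ = insert 0 Φ'.
  set Φ₀ : Set ℚ := insert 0 Φ' with hΦ₀def
  have h0Φ₀ : (0 : ℚ) ∈ Φ₀ := Set.mem_insert 0 Φ'
  have hΦ₀nonneg : ∀ x ∈ Φ₀, (0 : ℚ) ≤ x := by
    rintro x (rfl | hx)
    · exact le_refl 0
    · exact (hΦ'sub hx).1.le
  have hΦ₀pwo : Φ₀.IsPWO := (hWF.isPWO.insert 0)
  set N : ℕ := ⌈(1 : ℚ) / δ⌉₊ with hNdef
  -- Shift: g n = f (n+1); all values are < 1.
  set g : ℕ → ℚ := fun n => f (n + 1) with hgdef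
  have hganti : StrictAnti g := fun a b hab => hanti (by omega)
  have hg1 : ∀ n, g n < 1 := by
    intro n
    have h1 : f (n + 1) < f 0 := hanti (by omega)
    have h2 : f 0 ≤ 1 := (hf 0).1
    simpa [hgdef] using lt_of_lt_of_le h1 h2
  -- For each n, extract m and s with the key properties.
  have key : ∀ n, ∃ (m : ℕ) (s : ℚ), 0 < m ∧ s ∈ sumSet Φ₀ N ∧ 0 ≤ s ∧
      g n = ((m : ℚ) - 1) / m + s / m := by
    intro n
    obtain ⟨hle, h1 | ⟨m, hm, n', l, b, hb, heq⟩⟩ := hf (n + 1)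
    · exact absurd h1 (ne_of_lt (hg1 n))
    set s : ℚ := ∑ i, (l i : ℚ) * b i with hsdef
    have hbΦ₀ : ∀ i, b i ∈ Φ₀ := fun i => Set.mem_insert_of_mem _ (Set.mem_insert_of_mem _ (hb i))
    have hsmem : s ∈ sumSet Φ₀ (∑ i, l i) := sum_mem_sumSet n' l b hbΦ₀
    have hs0 : 0 ≤ s := sumSet_nonneg hΦ₀nonneg _ s hsmem
    have hmQ : (0 : ℚ) < m := by exact_mod_cast hm
    -- s ≤ 1 from g n ≤ 1.
    have hs1 : s ≤ 1 := by
      have : ((m : ℚ) - 1) / m + s / m ≤ 1 := heq ▸ hle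
      rw [← add_div, div_le_one hmQ] at this
      linarith
    -- lower bound: δ * (∑ l) ≤ s.
    have hlow : δ * (∑ i, (l i : ℚ)) ≤ s := by
      rw [Finset.mul_sum, hsdef]
      apply Finset.sum_le_sum
      intro i _
      have hδb : δ ≤ b i := hδle _ (Set.mem_insert_of_mem _ (hb i))
      have : (0 : ℚ) ≤ (l i : ℚ) := Nat.cast_nonneg _
      calc δ * (l i : ℚ) = (l i : ℚ) * δ := by ring
        _ ≤ (l i : ℚ) * b i := by exact mul_le_mul_of_nonneg_left hδb this
    have hLN : (∑ i, l i) ≤ N := by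
      have hsum : ((∑ i, l i : ℕ) : ℚ) = ∑ i, (l i : ℚ) := by push_cast; ring
      have h1 : ((∑ i, l i : ℕ) : ℚ) ≤ 1 / δ := by
        rw [hsum, le_div_iff₀ hδpos]
        calc (∑ i, (l i : ℚ)) * δ = δ * (∑ i, (l i : ℚ)) := by ring
          _ ≤ s := hlow
          _ ≤ 1 := hs1
      have h2 : (1 : ℚ) / δ ≤ (N : ℚ) := Nat.le_ceil _
      exact_mod_cast le_trans h1 h2
    exact ⟨m, s, hm, sumSet_mono h0Φ₀ hLN hsmem, hs0, heq⟩
  choose m s hm hsmem hs0 heq using key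
  -- The denominators m n are bounded.
  have hε : 0 < 1 - g 0 := by linarith [hg1 0]
  set ε : ℚ := 1 - g 0 with hεdef
  have hgub : ∀ n, 1 - g n = (1 - s n) / (m n) := by
    intro n
    have hmQ : (0 : ℚ) < m n := by exact_mod_cast hm n
    rw [heq n]
    field_simp
    ring
  have hmle : ∀ n, (m n : ℚ) ≤ 1 / ε := by
    intro n
    have hmQ : (0 : ℚ) < m n := by exact_mod_cast hm n
    have h1 : ε ≤ 1 - g n := by
      have : g n ≤ g 0 := hganti.antitone (Nat.zero_le n)
      simp only [hεdef]
      linarith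
    have h2 : (1 - s n) / (m n) ≤ 1 / (m n) := by
      gcongr
      linarith [hs0 n]
    have h3 : ε ≤ 1 / (m n) := by
      rw [hgub n] at h1
      linarith
    rw [le_div_iff₀ hε]
    rw [le_div_iff₀ hmQ] at h3
    linarith
  set M : ℕ := ⌈(1 : ℚ) / ε⌉₊ with hMdef
  have hmM : ∀ n, m n < M + 1 := by
    intro n
    have h1 : (m n : ℚ) ≤ (M : ℚ) := le_trans (hmle n) (Nat.le_ceil _)
    have : m n ≤ M := by exact_mod_cast h1
    omega
  -- Pigeonhole: infinitely many n share the same value of m.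
  set F : ℕ → Fin (M + 1) := fun n => ⟨m n, hmM n⟩ with hFdef
  obtain ⟨y, hy⟩ := Finite.exists_infinite_fiber F
  set s' : Set ℕ := F ⁻¹' {y} with hs'def
  haveI : Infinite s' := hy
  set e : ℕ ↪o ℕ := Nat.orderEmbeddingOfSet s' with hedef
  have hemem : ∀ k, e k ∈ s' := by
    intro k
    have : e k ∈ Set.range (Nat.orderEmbeddingOfSet s') := Set.mem_range_self k
    rwa [Nat.orderEmbeddingOfSet_range] at this
  have hmconst : ∀ k, m (e k) = (y : ℕ) := by
    intro k
    have := hemem k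
    simp only [hs'def, Set.mem_preimage, Set.mem_singleton_iff, hFdef] at this
    exact congrArg Fin.val this
  -- The sequence s ∘ e is strictly decreasing in sumSet Φ₀ N: contradiction.
  have hWFsum : (sumSet Φ₀ N).IsWF := (sumSet_isPWO hΦ₀pwo N).isWF
  rw [Set.isWF_iff_no_descending_seq] at hWFsum
  apply hWFsum (fun k => s (e k)) ?_ (fun k => hsmem (e k))
  intro a b hab
  have hmQ : (0 : ℚ) < (y : ℕ) := by
    have := hm (e 0)
    rw [hmconst 0] at this
    exact_mod_cast this
  have hlt : g (e b) < g (e a) := hganti (e.strictMono hab)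
  have ha' : 1 - g (e a) = (1 - s (e a)) / ((y : ℕ) : ℚ) := by
    rw [hgub (e a), hmconst a]
  have hb' : 1 - g (e b) = (1 - s (e b)) / ((y : ℕ) : ℚ) := by
    rw [hgub (e b), hmconst b]
  have : (1 - s (e a)) / ((y : ℕ) : ℚ) < (1 - s (e b)) / ((y : ℕ) : ℚ) := by
    rw [← ha', ← hb']
    linarith
  have := (div_lt_div_iff_of_pos_right hmQ).mp this
  linarith
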